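/- Let φ ∈ S(ℝ^n) and let (x_ε)_{ε∈(0,1]} be a moderate net of points of ℝ^n. Then: (a) the net (y ↦ φ_ε(x_ε − y))_ε is S-moderate; (b) if (x'_ε)_{ε∈(0,1]} is another moderate net of points with |x_ε − x'_ε| = O(ε^q) as ε → 0 for every q ∈ ℕ, then the net (y ↦ φ_ε(x_ε − y) − φ_ε(x'_ε − y))_ε is S-negligible. -/

import Mathlib

open MeasureTheory
open scoped ENNReal

noncomputable section

/-- `P ε` holds for all sufficiently small `ε ∈ (0,1]`. -/
def EvSmall (P : ℝ → Prop) : Prop :=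
  ∃ η : ℝ, 0 < η ∧ η ≤ 1 ∧ ∀ ε : ℝ, 0 < ε → ε ≤ η → P ε

/-- Partial derivative in the `i`-th coordinate direction. -/
def pd {n : ℕ} (i : Fin n) (f : (Fin n → ℝ) → ℂ) : (Fin n → ℝ) → ℂ :=
  fun x => fderiv ℝ f x (Pi.single i 1)

/-- Multi-index partial derivative `∂^β`. -/
def pdm {n : ℕ} (β : Fin n → ℕ) (f : (Fin n → ℝ) → ℂ) : (Fin n → ℝ) → ℂ :=
  (List.finRange n).foldr (fun i g => (pd i)^[β i] g) f

/-- The monomial `x^α`. -/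
def monom {n : ℕ} (α : Fin n → ℕ) (x : Fin n → ℝ) : ℝ := ∏ i, (x i) ^ (α i)

/-- A net of (smooth) functions on `ℝ^n` is S-moderate if for all multi-indices `α, β`
there is `N` with `sup_x |x^α ∂^β u_ε(x)| = O(ε^{-N})` as `ε → 0`. -/
def SMod {n : ℕ} (u : ℝ → (Fin n → ℝ) → ℂ) : Prop :=
  ∀ α β : Fin n → ℕ, ∃ N : ℕ, ∃ C : ℝ, EvSmall fun ε =>
    ∀ x, |monom α x| * ‖pdm β (u ε) x‖ ≤ C * ε ^ (-(N : ℤ))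

/-- A net of (smooth) functions on `ℝ^n` is S-negligible if for all multi-indices `α, β`
and every `q ∈ ℕ`, `sup_x |x^α ∂^β u_ε(x)| = O(ε^q)` as `ε → 0`. -/
def SNeg {n : ℕ} (u : ℝ → (Fin n → ℝ) → ℂ) : Prop :=
  ∀ α β : Fin n → ℕ, ∀ q : ℕ, ∃ C : ℝ, EvSmall fun ε =>
    ∀ x, |monom α x| * ‖pdm β (u ε) x‖ ≤ C * ε ^ q

/-- A moderate net of points of `ℝ^n`: `|x_ε| = O(ε^{-N})` for some `N`. -/
def PtMod {n : ℕ} (x : ℝ → Fin n → ℝ) : Prop :=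
  ∃ N : ℕ, ∃ C : ℝ, EvSmall fun ε => ‖x ε‖ ≤ C * ε ^ (-(N : ℤ))

open SchwartzMap

/-! ### Auxiliary lemmas -/

lemma hasF {n : ℕ} (c r : ℝ) (a : Fin n → ℝ) (ψ : SchwartzMap (Fin n → ℝ) ℂ) (y : Fin n → ℝ) :
    HasFDerivAt (fun y : Fin n → ℝ => c • ψ (r • (a - y)))
      (c • ((fderiv ℝ ψ (r • (a - y))).comp (-(r • ContinuousLinearMap.id ℝ (Fin n → ℝ))))) y := by
  have h1 : HasFDerivAt (fun y : Fin n → ℝ => y) (ContinuousLinearMap.id ℝ _) y :=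
    hasFDerivAt_id y
  have hL : HasFDerivAt (fun y : Fin n → ℝ => r • (a - y))
      (-(r • ContinuousLinearMap.id ℝ (Fin n → ℝ))) y := by
    simpa [smul_sub] using ((h1.const_smul r).const_sub (r • a))
  exact ((ψ.differentiableAt.hasFDerivAt).comp y hL).const_smul c

lemma step {n : ℕ} (c r : ℝ) (a : Fin n → ℝ) (ψ : SchwartzMap (Fin n → ℝ) ℂ) (i : Fin n) :
    pd i (fun y => c • ψ (r • (a - y))) =
      fun y => (-r * c) • (LineDeriv.lineDerivOpCLM ℝ (SchwartzMap (Fin n → ℝ) ℂ) (F := SchwartzMap (Fin n → ℝ) ℂ) (Pi.single i (1:ℝ) : Fin n → ℝ) ψ) (r • (a - y)) := by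
  funext y
  simp only [pd, (hasF c r a ψ y).fderiv, ContinuousLinearMap.smul_apply,
    ContinuousLinearMap.comp_apply, ContinuousLinearMap.neg_apply,
    ContinuousLinearMap.smul_apply, ContinuousLinearMap.id_apply,
    LineDeriv.lineDerivOpCLM_apply, SchwartzMap.lineDerivOp_apply_eq_fderiv, _root_.map_neg, _root_.map_smul]
  rw [smul_neg, smul_smul, ← neg_smul, mul_comm, neg_mul]

lemma stepD {n : ℕ} (c r : ℝ) (a b : Fin n → ℝ) (ψ : SchwartzMap (Fin n → ℝ) ℂ) (i : Fin n) :
    pd i (fun y => c • ψ (r • (a - y)) - c • ψ (r • (b - y))) =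
      fun y => (-r * c) • (LineDeriv.lineDerivOpCLM ℝ (SchwartzMap (Fin n → ℝ) ℂ) (F := SchwartzMap (Fin n → ℝ) ℂ) (Pi.single i (1:ℝ) : Fin n → ℝ) ψ) (r • (a - y)) -
        (-r * c) • (LineDeriv.lineDerivOpCLM ℝ (SchwartzMap (Fin n → ℝ) ℂ) (F := SchwartzMap (Fin n → ℝ) ℂ) (Pi.single i (1:ℝ) : Fin n → ℝ) ψ) (r • (b - y)) := by
  funext y
  have h := (hasF c r a ψ y).sub (hasF c r b ψ y)
  replace h : HasFDerivAt (fun y => c • ψ (r • (a - y)) - c • ψ (r • (b - y))) _ y := h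
  simp only [pd, h.fderiv, ContinuousLinearMap.sub_apply, ContinuousLinearMap.smul_apply,
    ContinuousLinearMap.comp_apply, ContinuousLinearMap.neg_apply,
    ContinuousLinearMap.smul_apply, ContinuousLinearMap.id_apply,
    LineDeriv.lineDerivOpCLM_apply, SchwartzMap.lineDerivOp_apply_eq_fderiv, _root_.map_neg, _root_.map_smul]
  rw [smul_neg, smul_smul, smul_neg, smul_smul, ← neg_smul, ← neg_smul, mul_comm, neg_mul]

lemma iter1 {n : ℕ} (i : Fin n) (k : ℕ) (c r : ℝ) (a : Fin n → ℝ)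
    (ψ : SchwartzMap (Fin n → ℝ) ℂ) :
    (pd i)^[k] (fun y => c • ψ (r • (a - y))) =
      fun y => ((-r) ^ k * c) • ((LineDeriv.lineDerivOpCLM ℝ (SchwartzMap (Fin n → ℝ) ℂ) (F := SchwartzMap (Fin n → ℝ) ℂ) (Pi.single i (1:ℝ) : Fin n → ℝ))^[k] ψ) (r • (a - y)) := by
  induction k generalizing c ψ with
  | zero => simp
  | succ k ih =>
    rw [Function.iterate_succ_apply', ih, step]
    funext y
    rw [Function.iterate_succ_apply',
      show -r * ((-r) ^ k * c) = (-r) ^ (k + 1) * c by ring]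

lemma iterD {n : ℕ} (i : Fin n) (k : ℕ) (c r : ℝ) (a b : Fin n → ℝ)
    (ψ : SchwartzMap (Fin n → ℝ) ℂ) :
    (pd i)^[k] (fun y => c • ψ (r • (a - y)) - c • ψ (r • (b - y))) =
      fun y => ((-r) ^ k * c) • ((LineDeriv.lineDerivOpCLM ℝ (SchwartzMap (Fin n → ℝ) ℂ) (F := SchwartzMap (Fin n → ℝ) ℂ) (Pi.single i (1:ℝ) : Fin n → ℝ))^[k] ψ) (r • (a - y)) -
        ((-r) ^ k * c) • ((LineDeriv.lineDerivOpCLM ℝ (SchwartzMap (Fin n → ℝ) ℂ) (F := SchwartzMap (Fin n → ℝ) ℂ) (Pi.single i (1:ℝ) : Fin n → ℝ))^[k] ψ) (r • (b - y)) := by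
  induction k generalizing c ψ with
  | zero => simp
  | succ k ih =>
    rw [Function.iterate_succ_apply', ih, stepD]
    funext y
    rw [Function.iterate_succ_apply',
      show -r * ((-r) ^ k * c) = (-r) ^ (k + 1) * c by ring]

/-- Iterated Schwartz partial derivative along a multi-index. -/
def Pdm {n : ℕ} (β : Fin n → ℕ) (φ : SchwartzMap (Fin n → ℝ) ℂ) : SchwartzMap (Fin n → ℝ) ℂ :=
  (List.finRange n).foldr (fun i ψ => (LineDeriv.lineDerivOpCLM ℝ (SchwartzMap (Fin n → ℝ) ℂ) (F := SchwartzMap (Fin n → ℝ) ℂ) (Pi.single i (1:ℝ) : Fin n → ℝ))^[β i] ψ) φ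

lemma fold1 {n : ℕ} (l : List (Fin n)) (β : Fin n → ℕ) (c r : ℝ) (a : Fin n → ℝ)
    (φ : SchwartzMap (Fin n → ℝ) ℂ) :
    l.foldr (fun i g => (pd i)^[β i] g) (fun y => c • φ (r • (a - y))) =
      fun y => ((-r) ^ ((l.map β).sum) * c) •
        (l.foldr (fun i ψ => (LineDeriv.lineDerivOpCLM ℝ (SchwartzMap (Fin n → ℝ) ℂ) (F := SchwartzMap (Fin n → ℝ) ℂ) (Pi.single i (1:ℝ) : Fin n → ℝ))^[β i] ψ) φ) (r • (a - y)) := by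
  induction l with
  | nil => simp
  | cons i l ih =>
    rw [List.foldr_cons, ih, iter1]
    funext y
    rw [List.foldr_cons, List.map_cons, List.sum_cons,
      show (-r) ^ (β i) * ((-r) ^ ((l.map β).sum) * c) = (-r) ^ (β i + (l.map β).sum) * c by
        rw [pow_add]; ring]

lemma foldD {n : ℕ} (l : List (Fin n)) (β : Fin n → ℕ) (c r : ℝ) (a b : Fin n → ℝ)
    (φ : SchwartzMap (Fin n → ℝ) ℂ) :
    l.foldr (fun i g => (pd i)^[β i] g)
        (fun y => c • φ (r • (a - y)) - c • φ (r • (b - y))) =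
      fun y => ((-r) ^ ((l.map β).sum) * c) •
        (l.foldr (fun i ψ => (LineDeriv.lineDerivOpCLM ℝ (SchwartzMap (Fin n → ℝ) ℂ) (F := SchwartzMap (Fin n → ℝ) ℂ) (Pi.single i (1:ℝ) : Fin n → ℝ))^[β i] ψ) φ) (r • (a - y)) -
        ((-r) ^ ((l.map β).sum) * c) •
        (l.foldr (fun i ψ => (LineDeriv.lineDerivOpCLM ℝ (SchwartzMap (Fin n → ℝ) ℂ) (F := SchwartzMap (Fin n → ℝ) ℂ) (Pi.single i (1:ℝ) : Fin n → ℝ))^[β i] ψ) φ) (r • (b - y)) := by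
  induction l with
  | nil => simp
  | cons i l ih =>
    rw [List.foldr_cons, ih, iterD]
    funext y
    rw [List.foldr_cons, List.map_cons, List.sum_cons,
      show (-r) ^ (β i) * ((-r) ^ ((l.map β).sum) * c) = (-r) ^ (β i + (l.map β).sum) * c by
        rw [pow_add]; ring]

lemma pdm1 {n : ℕ} (β : Fin n → ℕ) (c r : ℝ) (a : Fin n → ℝ)
    (φ : SchwartzMap (Fin n → ℝ) ℂ) :
    pdm β (fun y => c • φ (r • (a - y))) =
      fun y => ((-r) ^ (((List.finRange n).map β).sum) * c) • (Pdm β φ) (r • (a - y)) :=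
  fold1 _ β c r a φ

lemma pdmD {n : ℕ} (β : Fin n → ℕ) (c r : ℝ) (a b : Fin n → ℝ)
    (φ : SchwartzMap (Fin n → ℝ) ℂ) :
    pdm β (fun y => c • φ (r • (a - y)) - c • φ (r • (b - y))) =
      fun y => ((-r) ^ (((List.finRange n).map β).sum) * c) • (Pdm β φ) (r • (a - y)) -
        ((-r) ^ (((List.finRange n).map β).sum) * c) • (Pdm β φ) (r • (b - y)) :=
  foldD _ β c r a b φ

lemma schwartzBound {n : ℕ} (ψ : SchwartzMap (Fin n → ℝ) ℂ) (m : ℕ) :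
    ∃ C : ℝ, 0 ≤ C ∧ ∀ z, (1 + ‖z‖) ^ m * ‖ψ z‖ ≤ C ∧ (1 + ‖z‖) ^ m * ‖fderiv ℝ ψ z‖ ≤ C := by
  refine ⟨2 ^ m * (Finset.Iic (m, 1)).sup (fun p => SchwartzMap.seminorm ℝ p.1 p.2) ψ,
    by positivity, fun z => ⟨?_, ?_⟩⟩
  · simpa [norm_iteratedFDeriv_zero] using
      SchwartzMap.one_add_le_sup_seminorm_apply (𝕜 := ℝ) (m := (m, 1)) le_rfl (Nat.zero_le 1) ψ z
  · have h := SchwartzMap.one_add_le_sup_seminorm_apply (𝕜 := ℝ) (m := (m, 1)) le_rfl le_rfl ψ z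
    have h2 : ‖fderiv ℝ (⇑ψ) z‖ = ‖iteratedFDeriv ℝ 1 (⇑ψ) z‖ := by
      rw [← norm_iteratedFDeriv_fderiv (n := 0), norm_iteratedFDeriv_zero]
    rw [h2]
    exact h

lemma monomBound {n : ℕ} (α : Fin n → ℕ) (y : Fin n → ℝ) {t : ℝ} (ht : ∀ i, |y i| ≤ t) :
    |monom α y| ≤ t ^ (∑ i, α i) := by
  rw [monom, Finset.abs_prod]
  calc ∏ i, |y i ^ α i| ≤ ∏ i, t ^ α i :=
        Finset.prod_le_prod (fun i _ => abs_nonneg _)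
          (fun i _ => by rw [abs_pow]; exact pow_le_pow_left₀ (abs_nonneg _) (ht i) _)
    _ = t ^ ∑ i, α i := Finset.prod_pow_eq_pow_sum _ _ _

lemma seg_dist {E : Type*} [NormedAddCommGroup E] [NormedSpace ℝ E] {z z' w : E}
    (hw : w ∈ segment ℝ z' z) : ‖z - w‖ ≤ ‖z - z'‖ := by
  rcases hw with ⟨u, v, hu, hv, huv, rfl⟩
  have h : z - (u • z' + v • z) = u • (z - z') := by
    have hv' : v = 1 - u := by linarith
    subst hv'
    module
  rw [h, norm_smul, Real.norm_eq_abs, abs_of_nonneg hu]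
  have : u ≤ 1 := by linarith
  nlinarith [norm_nonneg (z - z')]

lemma monomEst {n : ℕ} (α : Fin n → ℕ) {C₀ : ℝ} (hC₀ : 1 ≤ C₀) {N₀ : ℕ} {ε : ℝ}
    (hε : 0 < ε) (hε1 : ε ≤ 1) {xe y z : Fin n → ℝ} (hz : z = ε⁻¹ • (xe - y))
    (hxe : ‖xe‖ ≤ C₀ * (ε ^ N₀)⁻¹) :
    |monom α y| ≤ C₀ ^ (∑ i, α i) * (ε ^ (N₀ * ∑ i, α i))⁻¹ * (1 + ‖z‖) ^ (∑ i, α i) := by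
  set A := ∑ i, α i with hA
  have hy : y = xe - ε • z := by
    rw [hz, smul_smul, mul_inv_cancel₀ hε.ne', one_smul, sub_sub_cancel]
  have hpow1 : ε ^ N₀ ≤ 1 := pow_le_one₀ hε.le hε1
  have hpowpos : (0:ℝ) < ε ^ N₀ := pow_pos hε _
  have hinv : (1:ℝ) ≤ (ε ^ N₀)⁻¹ := (one_le_inv₀ hpowpos).mpr hpow1
  have ht : ∀ i, |y i| ≤ C₀ * (ε ^ N₀)⁻¹ + ‖z‖ := by
    intro i
    have h1 : |y i| ≤ ‖y‖ := by rw [← Real.norm_eq_abs]; exact norm_le_pi_norm y i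
    have h2 : ‖y‖ ≤ ‖xe‖ + ε * ‖z‖ := by
      rw [hy]
      refine (norm_sub_le _ _).trans ?_
      rw [norm_smul, Real.norm_eq_abs, abs_of_pos hε]
    have h3 : ε * ‖z‖ ≤ ‖z‖ := by nlinarith [norm_nonneg z]
    linarith
  have hbase : C₀ * (ε ^ N₀)⁻¹ + ‖z‖ ≤ C₀ * (ε ^ N₀)⁻¹ * (1 + ‖z‖) := by
    have h1 : (1:ℝ) ≤ C₀ * (ε ^ N₀)⁻¹ := by nlinarith
    nlinarith [norm_nonneg z]
  calc |monom α y| ≤ (C₀ * (ε ^ N₀)⁻¹ + ‖z‖) ^ A := monomBound α y ht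
    _ ≤ (C₀ * (ε ^ N₀)⁻¹ * (1 + ‖z‖)) ^ A :=
        pow_le_pow_left₀ (by positivity) hbase A
    _ = C₀ ^ A * (ε ^ (N₀ * A))⁻¹ * (1 + ‖z‖) ^ A := by
        rw [mul_pow, mul_pow, ← inv_pow, ← pow_mul, inv_pow]

/-- (a) `(y ↦ φ_ε(x_ε − y))_ε` is S-moderate; (b) if `x'_ε` is another
moderate point net with `|x_ε − x'_ε| = O(ε^q)` for every `q`, the corresponding difference
net is S-negligible. -/
theorem stmt8 {n : ℕ} (φ : SchwartzMap (Fin n → ℝ) ℂ)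
    (x : ℝ → Fin n → ℝ) (hx : PtMod x) :
    SMod (fun ε y => (ε ^ n : ℝ)⁻¹ • φ (ε⁻¹ • (x ε - y))) ∧
    (∀ x' : ℝ → Fin n → ℝ, PtMod x' →
      (∀ q : ℕ, ∃ C : ℝ, EvSmall fun ε => ‖x ε - x' ε‖ ≤ C * ε ^ q) →
      SNeg (fun ε y => (ε ^ n : ℝ)⁻¹ • φ (ε⁻¹ • (x ε - y)) -
        (ε ^ n : ℝ)⁻¹ • φ (ε⁻¹ • (x' ε - y)))) := by
  obtain ⟨N₀, C₀, η₀, hη₀, hη₀1, hx0⟩ := hx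
  set C₀' := max C₀ 1 with hC₀'def
  have hC₀'1 : (1:ℝ) ≤ C₀' := le_max_right _ _
  have key_xe : ∀ ε : ℝ, 0 < ε → ε ≤ η₀ → ‖x ε‖ ≤ C₀' * (ε ^ N₀)⁻¹ := by
    intro ε hε hεη
    have h1 : ‖x ε‖ ≤ C₀ * ε ^ (-(N₀ : ℤ)) := hx0 ε hε hεη
    rw [zpow_neg, zpow_natCast] at h1
    have h2 : C₀ * (ε ^ N₀)⁻¹ ≤ C₀' * (ε ^ N₀)⁻¹ :=
      mul_le_mul_of_nonneg_right (le_max_left _ _) (by positivity)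
    linarith
  constructor
  · -- part (a)
    intro α β
    set A := ∑ i, α i with hAdef
    set S := ((List.finRange n).map β).sum with hSdef
    obtain ⟨C₁, hC₁0, hC₁⟩ := schwartzBound (Pdm β φ) A
    refine ⟨N₀ * A + (S + n), C₀' ^ A * C₁, η₀, hη₀, hη₀1, fun ε hε hεη => fun y => ?_⟩
    have hε1 : ε ≤ 1 := hεη.trans hη₀1
    set z := ε⁻¹ • (x ε - y) with hzdef
    have hmon := monomEst α hC₀'1 hε hε1 hzdef (key_xe ε hε hεη)
    have hval : ‖pdm β (fun y => (ε ^ n : ℝ)⁻¹ • φ (ε⁻¹ • (x ε - y))) y‖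
        = (ε ^ (S + n))⁻¹ * ‖(Pdm β φ) z‖ := by
      rw [pdm1, norm_smul, Real.norm_eq_abs, abs_mul, abs_pow, abs_neg, abs_inv, abs_of_pos hε,
        abs_inv, abs_pow, abs_of_pos hε, inv_pow, ← mul_inv, ← pow_add]
    show |monom α y| * ‖pdm β (fun y => (ε ^ n : ℝ)⁻¹ • φ (ε⁻¹ • (x ε - y))) y‖
      ≤ C₀' ^ A * C₁ * ε ^ (-((N₀ * A + (S + n) : ℕ) : ℤ))
    rw [hval, zpow_neg, zpow_natCast]
    calc |monom α y| * ((ε ^ (S + n))⁻¹ * ‖(Pdm β φ) z‖)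
        ≤ (C₀' ^ A * (ε ^ (N₀ * A))⁻¹ * (1 + ‖z‖) ^ A) * ((ε ^ (S + n))⁻¹ * ‖(Pdm β φ) z‖) :=
          mul_le_mul_of_nonneg_right hmon (by positivity)
      _ = (C₀' ^ A * ((ε ^ (N₀ * A))⁻¹ * (ε ^ (S + n))⁻¹)) * ((1 + ‖z‖) ^ A * ‖(Pdm β φ) z‖) := by
          ring
      _ ≤ (C₀' ^ A * ((ε ^ (N₀ * A))⁻¹ * (ε ^ (S + n))⁻¹)) * C₁ :=
          mul_le_mul_of_nonneg_left ((hC₁ z).1) (by positivity)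
      _ = C₀' ^ A * C₁ * (ε ^ (N₀ * A + (S + n)))⁻¹ := by
          rw [pow_add, mul_inv]; ring
  · -- part (b)
    intro x' _ hd α β q
    set A := ∑ i, α i with hAdef
    set S := ((List.finRange n).map β).sum with hSdef
    set K := N₀ * A + (S + n) with hKdef
    obtain ⟨C₂, hC₂0, hC₂⟩ := schwartzBound (Pdm β φ) A
    obtain ⟨Cd, ηd, hηd, hηd1, hdd⟩ := hd (q + K + 2)
    set Cd' := max Cd 0 with hCd'def
    have hCd'0 : (0:ℝ) ≤ Cd' := le_max_right _ _
    have hCdpos : (0:ℝ) < Cd' + 1 := by linarith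
    refine ⟨C₀' ^ A * 2 ^ A * C₂ * Cd', min η₀ (min ηd (Cd' + 1)⁻¹),
      lt_min hη₀ (lt_min hηd (by positivity)), (min_le_left _ _).trans hη₀1,
      fun ε hε hεη => fun y => ?_⟩
    have hεη₀ : ε ≤ η₀ := hεη.trans (min_le_left _ _)
    have hεηd : ε ≤ ηd := hεη.trans ((min_le_right _ _).trans (min_le_left _ _))
    have hεc : ε ≤ (Cd' + 1)⁻¹ := hεη.trans ((min_le_right _ _).trans (min_le_right _ _))
    have hε1 : ε ≤ 1 := hεη₀.trans hη₀1
    set z := ε⁻¹ • (x ε - y) with hzdef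
    set z' := ε⁻¹ • (x' ε - y) with hz'def
    set ψ := Pdm β φ with hψdef
    have hmon := monomEst α hC₀'1 hε hε1 hzdef (key_xe ε hε hεη₀)
    -- distance between z and z'
    have hzz' : z - z' = ε⁻¹ • (x ε - x' ε) := by
      rw [hzdef, hz'def, ← smul_sub]
      congr 1
      abel
    have hdist : ‖x ε - x' ε‖ ≤ Cd' * ε ^ (q + K + 2) :=
      (hdd ε hε hεηd).trans (mul_le_mul_of_nonneg_right (le_max_left _ _) (by positivity))
    have hdb : ‖z - z'‖ ≤ Cd' * ε ^ (q + K + 1) := by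
      rw [hzz', norm_smul, Real.norm_eq_abs, abs_inv, abs_of_pos hε]
      calc ε⁻¹ * ‖x ε - x' ε‖ ≤ ε⁻¹ * (Cd' * ε ^ (q + K + 2)) :=
            mul_le_mul_of_nonneg_left hdist (by positivity)
        _ = Cd' * ε ^ (q + K + 1) := by
            rw [pow_succ]
            field_simp
    have hd1 : ‖z - z'‖ ≤ 1 := by
      have h1 : ε ^ (q + K + 1) ≤ ε := by
        calc ε ^ (q + K + 1) ≤ ε ^ 1 := pow_le_pow_of_le_one hε.le hε1 (by omega)
          _ = ε := pow_one ε
      have h2 : Cd' * ε ≤ Cd' * (Cd' + 1)⁻¹ := mul_le_mul_of_nonneg_left hεc hCd'0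
      have h3 : Cd' * (Cd' + 1)⁻¹ ≤ 1 := by
        rw [← div_eq_mul_inv, div_le_one hCdpos]
        linarith
      have h4 : Cd' * ε ^ (q + K + 1) ≤ Cd' * ε := mul_le_mul_of_nonneg_left h1 hCd'0
      linarith
    -- mean value estimate
    have hzpos : (0:ℝ) < (1 + ‖z‖) ^ A := by positivity
    set M := 2 ^ A * C₂ / (1 + ‖z‖) ^ A with hMdef
    have hbound : ∀ w ∈ segment ℝ z' z, ‖fderiv ℝ (⇑ψ) w‖ ≤ M := by
      intro w hw
      rw [hMdef, le_div_iff₀ hzpos]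
      have h1 : ‖z - w‖ ≤ ‖z - z'‖ := seg_dist hw
      have h2 : ‖z‖ ≤ ‖w‖ + ‖z - w‖ := by
        have h := norm_add_le w (z - w)
        simpa using h
      have h3 : 1 + ‖z‖ ≤ 2 * (1 + ‖w‖) := by nlinarith [norm_nonneg w]
      calc ‖fderiv ℝ (⇑ψ) w‖ * (1 + ‖z‖) ^ A
          ≤ ‖fderiv ℝ (⇑ψ) w‖ * (2 * (1 + ‖w‖)) ^ A :=
            mul_le_mul_of_nonneg_left (pow_le_pow_left₀ (by positivity) h3 A) (norm_nonneg _)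
        _ = 2 ^ A * ((1 + ‖w‖) ^ A * ‖fderiv ℝ (⇑ψ) w‖) := by rw [mul_pow]; ring
        _ ≤ 2 ^ A * C₂ := mul_le_mul_of_nonneg_left ((hC₂ w).2) (by positivity)
    have hmvt : ‖ψ z - ψ z'‖ ≤ M * ‖z - z'‖ := by
      refine (convex_segment z' z).norm_image_sub_le_of_norm_fderiv_le
        (fun w _ => ψ.differentiableAt) hbound (left_mem_segment ℝ z' z)
        (right_mem_segment ℝ z' z)
    have hval : ‖pdm β (fun y => (ε ^ n : ℝ)⁻¹ • φ (ε⁻¹ • (x ε - y)) -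
          (ε ^ n : ℝ)⁻¹ • φ (ε⁻¹ • (x' ε - y))) y‖
        = (ε ^ (S + n))⁻¹ * ‖ψ z - ψ z'‖ := by
      rw [pdmD]
      show ‖((-ε⁻¹) ^ S * (ε ^ n)⁻¹) • (Pdm β φ) z - ((-ε⁻¹) ^ S * (ε ^ n)⁻¹) • (Pdm β φ) z'‖ = _
      rw [← smul_sub, norm_smul, Real.norm_eq_abs, abs_mul, abs_pow, abs_neg, abs_inv,
        abs_of_pos hε, abs_inv, abs_pow, abs_of_pos hε, inv_pow, ← mul_inv, ← pow_add]
    show |monom α y| * ‖pdm β (fun y => (ε ^ n : ℝ)⁻¹ • φ (ε⁻¹ • (x ε - y)) -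
        (ε ^ n : ℝ)⁻¹ • φ (ε⁻¹ • (x' ε - y))) y‖ ≤ C₀' ^ A * 2 ^ A * C₂ * Cd' * ε ^ q
    rw [hval]
    have hMz : (1 + ‖z‖) ^ A * M = 2 ^ A * C₂ := by
      rw [hMdef, mul_div_assoc']
      field_simp
    have hεK : ε ^ (q + K + 1) * (ε ^ K)⁻¹ = ε ^ (q + 1) := by
      rw [show q + K + 1 = (q + 1) + K by ring, pow_add, mul_assoc,
        mul_inv_cancel₀ (pow_ne_zero _ hε.ne'), mul_one]
    calc |monom α y| * ((ε ^ (S + n))⁻¹ * ‖ψ z - ψ z'‖)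
        ≤ (C₀' ^ A * (ε ^ (N₀ * A))⁻¹ * (1 + ‖z‖) ^ A) * ((ε ^ (S + n))⁻¹ * ‖ψ z - ψ z'‖) :=
          mul_le_mul_of_nonneg_right hmon (by positivity)
      _ = (C₀' ^ A * ((ε ^ (N₀ * A))⁻¹ * (ε ^ (S + n))⁻¹)) * ((1 + ‖z‖) ^ A * ‖ψ z - ψ z'‖) := by
          ring
      _ ≤ (C₀' ^ A * ((ε ^ (N₀ * A))⁻¹ * (ε ^ (S + n))⁻¹)) * ((1 + ‖z‖) ^ A * (M * ‖z - z'‖)) := by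
          refine mul_le_mul_of_nonneg_left ?_ (by positivity)
          exact mul_le_mul_of_nonneg_left hmvt (by positivity)
      _ = (C₀' ^ A * (ε ^ K)⁻¹) * (((1 + ‖z‖) ^ A * M) * ‖z - z'‖) := by
          rw [hKdef, pow_add, mul_inv]; ring
      _ = (C₀' ^ A * (ε ^ K)⁻¹) * ((2 ^ A * C₂) * ‖z - z'‖) := by rw [hMz]
      _ ≤ (C₀' ^ A * (ε ^ K)⁻¹) * ((2 ^ A * C₂) * (Cd' * ε ^ (q + K + 1))) := by
          refine mul_le_mul_of_nonneg_left ?_ (by positivity)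
          exact mul_le_mul_of_nonneg_left hdb (by positivity)
      _ = (C₀' ^ A * 2 ^ A * C₂ * Cd') * (ε ^ (q + K + 1) * (ε ^ K)⁻¹) := by ring
      _ = (C₀' ^ A * 2 ^ A * C₂ * Cd') * ε ^ (q + 1) := by rw [hεK]
      _ ≤ (C₀' ^ A * 2 ^ A * C₂ * Cd') * ε ^ q := by
          refine mul_le_mul_of_nonneg_left ?_ (by positivity)
          calc ε ^ (q + 1) = ε ^ q * ε := pow_succ ε q
            _ ≤ ε ^ q * 1 := mul_le_mul_of_nonneg_left hε1 (by positivity)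
            _ = ε ^ q := mul_one _
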